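/- With notation as above, let π₂ : X × X → X be projection onto the second coordinate. Then for every s ∈ X, (1/2)(π₂σ_s + T(π₂σ_s)) = μ, where π₂σ_s denotes the pushforward of σ_s under π₂ and T(ν) denotes the pushforward of ν under T. -/

import Mathlib

open MeasureTheory Filter
open scoped ENNReal

set_option linter.unusedSectionVars false
set_option linter.unusedVariables false

section Auxiliary

open Set Filter MeasureTheory
open scoped NNReal BoundedContinuousFunction Pointwise ProbabilityTheory

/-- The π-system generated by a countable family of sets is countable. -/
lemma countable_generatePiSystem_aux {α : Type*} {S : Set (Set α)} (hS : S.Countable) :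
    (generatePiSystem S).Countable := by
  have hsub : generatePiSystem S ⊆ Set.sInter '' {t : Set (Set α) | t.Finite ∧ t ⊆ S} := by
    intro x hx
    induction hx with
    | base h_s =>
      exact ⟨{_}, ⟨Set.finite_singleton _, Set.singleton_subset_iff.mpr h_s⟩, by simp⟩
    | inter hs ht hne ihs iht =>
      obtain ⟨T, ⟨hTfin, hTsub⟩, rfl⟩ := ihs
      obtain ⟨U, ⟨hUfin, hUsub⟩, rfl⟩ := iht
      exact ⟨T ∪ U, ⟨hTfin.union hUfin, Set.union_subset hTsub hUsub⟩, (Set.sInter_union T U)⟩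
  exact ((Set.countable_setOf_finite_subset hS).image _).mono hsub

variable {Z : Type*} [MetricSpace Z] [CompactSpace Z] [AddCommGroup Z]
    [IsTopologicalAddGroup Z] [MeasurableSpace Z] [BorelSpace Z]

/-- The preimage of `H + U` under the rotation by `α ∈ H` is itself. -/
lemma preimage_rot_aux {H : AddSubgroup Z} {α : Z} (hα : α ∈ H) (U : Set Z) :
    (fun z => z + α) ⁻¹' ((H : Set Z) + U) = (H : Set Z) + U := by
  ext z
  simp only [Set.mem_preimage, Set.mem_add]
  constructor
  · rintro ⟨h, hh, u, hu, hzu⟩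
    exact ⟨h - α, H.sub_mem hh hα, u, hu,
      add_right_cancel (b := α) (show h - α + u + α = z + α by rw [← hzu]; abel)⟩
  · rintro ⟨h, hh, u, hu, hzu⟩
    exact ⟨h + α, H.add_mem hh hα, u, hu, by rw [← hzu]; abel⟩

/-- If the rotation by `α` is ergodic for the Haar probability measure, then the closed
subgroup generated by `α` is the whole group. -/
lemma orbit_closure_eq_top_aux
    (m : Measure Z) [IsProbabilityMeasure m] [m.IsAddHaarMeasure]
    (α : Z) (hR : Ergodic (fun z => z + α) m) :
    (AddSubgroup.closure {α}).topologicalClosure = ⊤ := by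
  set H := (AddSubgroup.closure {α}).topologicalClosure with hH
  have hα : α ∈ H :=
    AddSubgroup.le_topologicalClosure _ (AddSubgroup.subset_closure (Set.mem_singleton α))
  have hHclosed : IsClosed (H : Set Z) := AddSubgroup.isClosed_topologicalClosure _
  by_contra hne
  obtain ⟨x, hx⟩ : ∃ x : Z, x ∉ H := by
    by_contra h
    push_neg at h
    exact hne (AddSubgroup.eq_top_iff' H |>.mpr h)
  -- separate H from x
  obtain ⟨V, hV, hHV⟩ : ∃ V ∈ nhds (0 : Z), (H : Set Z) + V ⊆ {x}ᶜ := by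
    refine compact_open_separated_add_right hHclosed.isCompact (isOpen_compl_singleton)
      (fun z hz => ?_)
    simp only [Set.mem_compl_iff, Set.mem_singleton_iff]
    rintro rfl; exact hx hz
  -- find W with W - W ⊆ V
  have hsubcont : Filter.Tendsto (fun p : Z × Z => p.1 - p.2) (nhds (0, 0)) (nhds 0) := by
    have := (continuous_sub (G := Z)).tendsto ((0 : Z), (0 : Z))
    simpa using this
  have hVpre : (fun p : Z × Z => p.1 - p.2) ⁻¹' V ∈ nhds ((0 : Z), (0 : Z)) := hsubcont hV
  obtain ⟨W₁, hW₁, W₂, hW₂, hWsub⟩ := mem_nhds_prod_iff.mp hVpre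
  set U : Set Z := interior (W₁ ∩ W₂) with hU
  have hUopen : IsOpen U := isOpen_interior
  have hU0 : (0 : Z) ∈ U := mem_interior_iff_mem_nhds.mpr (Filter.inter_mem hW₁ hW₂)
  have hUsub : U ⊆ W₁ ∩ W₂ := interior_subset
  -- the two invariant open sets
  set A : Set Z := (H : Set Z) + U with hA
  set B : Set Z := (H : Set Z) + ((fun z => x + z) '' U) with hB
  have hAopen : IsOpen A := hUopen.add_left
  have hBopen : IsOpen B := ((Homeomorph.addLeft x).isOpenMap U hUopen).add_left
  have hAne : A.Nonempty := ⟨0 + 0, Set.add_mem_add (H.zero_mem) hU0⟩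
  have hBne : B.Nonempty := ⟨0 + (x + 0), Set.add_mem_add H.zero_mem ⟨0, hU0, rfl⟩⟩
  have hApos : 0 < m A := hAopen.measure_pos m hAne
  have hBpos : 0 < m B := hBopen.measure_pos m hBne
  have hAinv : (fun z => z + α) ⁻¹' A = A := preimage_rot_aux hα U
  have hBinv : (fun z => z + α) ⁻¹' B = B := preimage_rot_aux hα _
  have hA1 : m A = 1 := by
    rcases hR.toPreErgodic.measure_self_or_compl_eq_zero hAopen.measurableSet hAinv with h | h
    · exact absurd h hApos.ne'
    · rwa [← prob_compl_eq_zero_iff hAopen.measurableSet]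
  have hB1 : m B = 1 := by
    rcases hR.toPreErgodic.measure_self_or_compl_eq_zero hBopen.measurableSet hBinv with h | h
    · exact absurd h hBpos.ne'
    · rwa [← prob_compl_eq_zero_iff hBopen.measurableSet]
  -- disjointness
  have hdisj : Disjoint A B := by
    rw [Set.disjoint_left]
    rintro z ⟨h, hh, u, hu, hzu⟩ ⟨h', hh', w, ⟨u', hu', rfl⟩, hzu'⟩
    have hxmem : x ∈ (H : Set Z) + V := by
      refine ⟨h - h', H.sub_mem hh hh', u - u', ?_, ?_⟩
      · exact hWsub (Set.mk_mem_prod ((hUsub hu).1) ((hUsub hu').2))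
      · have h2 : h + u = h' + (x + u') := hzu.trans hzu'.symm
        have hx' : x = h + u - h' - u' := by rw [h2]; abel
        rw [hx']; abel
    exact hHV hxmem rfl
  have h2 : m (A ∪ B) = 2 := by
    rw [measure_union hdisj hBopen.measurableSet, hA1, hB1]; norm_num
  have hle : m (A ∪ B) ≤ 1 := prob_le_one
  rw [h2] at hle
  norm_num at hle

/-- A rotation-invariant probability measure is the Haar measure, when the rotation is
ergodic for the Haar measure (unique ergodicity of ergodic rotations). -/
lemma invariant_eq_haar_aux
    (m : Measure Z) [IsProbabilityMeasure m] [m.IsAddHaarMeasure]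
    (α : Z) (hR : Ergodic (fun z => z + α) m)
    (ν : Measure Z) [IsProbabilityMeasure ν]
    (hν : Measure.map (· + α) ν = ν) : ν = m := by
  have hmemS : ∀ t : Z, (∀ f : Z →ᵇ ℝ≥0, ∫⁻ z, f (z + t) ∂ν = ∫⁻ z, f z ∂ν) ↔
      Measure.map (· + t) ν = ν := by
    intro t
    constructor
    · intro h
      haveI : IsProbabilityMeasure (Measure.map (· + t) ν) :=
        Measure.isProbabilityMeasure_map (measurable_add_const t).aemeasurable
      refine ext_of_forall_lintegral_eq_of_IsFiniteMeasure (fun f => ?_)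
      have hfm : Measurable fun z : Z => (f z : ℝ≥0∞) :=
        measurable_coe_nnreal_ennreal.comp f.continuous.measurable
      rw [lintegral_map hfm (measurable_add_const t)]
      exact h f
    · intro h f
      have hfm : Measurable fun z : Z => (f z : ℝ≥0∞) :=
        measurable_coe_nnreal_ennreal.comp f.continuous.measurable
      conv_rhs => rw [← h]
      rw [lintegral_map hfm (measurable_add_const t)]
  set S : AddSubgroup Z :=
    { carrier := {t : Z | Measure.map (· + t) ν = ν}
      zero_mem' := by
        simp only [Set.mem_setOf_eq]
        have : (fun z : Z => z + 0) = id := by funext z; simp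
        rw [this, Measure.map_id]
      add_mem' := by
        intro t u ht hu
        simp only [Set.mem_setOf_eq] at *
        have : (fun z : Z => z + (t + u)) = (fun z => z + u) ∘ (fun z => z + t) := by
          funext z; simp [Function.comp, add_assoc]
        rw [this, ← Measure.map_map (measurable_add_const u) (measurable_add_const t), ht, hu]
      neg_mem' := by
        intro t ht
        simp only [Set.mem_setOf_eq] at *
        have h2 : Measure.map (· + (-t)) (Measure.map (· + t) ν) = ν := by
          rw [Measure.map_map (measurable_add_const (-t)) (measurable_add_const t)]
          have : ((· + (-t)) ∘ (· + t)) = (id : Z → Z) := by funext z; simp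
          rw [this, Measure.map_id]
        rw [ht] at h2
        exact h2 } with hS
  have hSclosed : IsClosed (S : Set Z) := by
    apply IsSeqClosed.isClosed
    intro x p hx hxp
    have hx' : ∀ n, ∀ f : Z →ᵇ ℝ≥0, ∫⁻ z, f (z + x n) ∂ν = ∫⁻ z, f z ∂ν :=
      fun n => (hmemS (x n)).mpr (hx n)
    refine (hmemS p).mp (fun f => ?_)
    have hconv : Filter.Tendsto (fun n => ∫⁻ z, f (z + x n) ∂ν) Filter.atTop
        (nhds (∫⁻ z, f (z + p) ∂ν)) := by
      apply tendsto_lintegral_of_dominated_convergence (fun _ => (nndist f 0 : ℝ≥0∞))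
      · exact fun n => (measurable_coe_nnreal_ennreal.comp
          (f.continuous.measurable.comp (measurable_add_const (x n))))
      · intro n
        refine Filter.Eventually.of_forall (fun z => ?_)
        simp only [ENNReal.coe_le_coe]
        have h1 := BoundedContinuousFunction.nndist_coe_le_nndist (f := f)
          (g := 0) (z + x n)
        simpa [nndist_comm, NNReal.nndist_zero_eq_val] using h1
      · simp [edist_ne_top]
      · refine Filter.Eventually.of_forall (fun z => ?_)
        have h1 : Filter.Tendsto (fun n => z + x n) Filter.atTop (nhds (z + p)) :=
          tendsto_const_nhds.add hxp
        exact (ENNReal.continuous_coe.tendsto _).comp ((f.continuous.tendsto _).comp h1)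
    have heq : ∀ n, (fun n => ∫⁻ z, f (z + x n) ∂ν) n = ∫⁻ z, f z ∂ν := fun n => hx' n f
    rw [tendsto_congr heq] at hconv
    exact tendsto_nhds_unique tendsto_const_nhds hconv |>.symm
  have hαS : α ∈ S := hν
  have hStop : ∀ t : Z, Measure.map (· + t) ν = ν := by
    have h1 : (AddSubgroup.closure {α}) ≤ S := AddSubgroup.closure_le S |>.mpr (by
      simpa using hαS)
    have h2 : (AddSubgroup.closure {α}).topologicalClosure ≤ S :=
      AddSubgroup.topologicalClosure_minimal _ h1 hSclosed
    rw [orbit_closure_eq_top_aux m α hR] at h2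
    exact fun t => h2 trivial
  haveI : ν.IsAddRightInvariant := ⟨hStop⟩
  haveI : ν.IsAddLeftInvariant := by
    constructor
    intro g
    have : (fun z : Z => g + z) = (fun z => z + g) := by funext z; exact add_comm g z
    rw [this]; exact hStop g
  have huniq := Measure.isAddLeftInvariant_eq_smul ν m
  have hmass : Measure.addHaarScalarFactor ν m = 1 := by
    have h := congrArg (fun μ : Measure Z => μ Set.univ) huniq
    simp only [Measure.smul_apply, measure_univ, ENNReal.smul_def, smul_eq_mul, mul_one] at h
    exact_mod_cast h.symm
  rw [huniq, hmass, one_smul]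

/-- `m = (1/2)(ξ + Rξ)` where `ξ` is the pushforward of `m` under the doubling map,
translated by `c`. -/
lemma double_haar_aux
    (m : Measure Z) [IsProbabilityMeasure m] [m.IsAddHaarMeasure]
    (α : Z) (hR : Ergodic (fun z => z + α) m) (c : Z) :
    Measure.map (fun z => c + (z + z)) m + Measure.map (fun z => c + (z + z) + α) m
      = (2 : ℝ≥0∞) • m := by
  have hdbl : Measurable fun z : Z => z + z := by measurability
  set θ : Measure Z := Measure.map (fun z => z + z) m with hθ
  set θα : Measure Z := Measure.map (· + α) θ with hθα
  haveI : IsProbabilityMeasure θ := Measure.isProbabilityMeasure_map hdbl.aemeasurable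
  haveI : IsProbabilityMeasure θα :=
    Measure.isProbabilityMeasure_map (measurable_add_const α).aemeasurable
  have hinv : Measure.map (· + α) ((2 : ℝ≥0∞)⁻¹ • (θ + θα)) = (2 : ℝ≥0∞)⁻¹ • (θ + θα) := by
    rw [Measure.map_smul, Measure.map_add _ _ (measurable_add_const α)]
    have hαα : Measure.map (· + α) θα = θ := by
      rw [hθα, Measure.map_map (measurable_add_const α) (measurable_add_const α), hθ,
        Measure.map_map ((measurable_add_const α).comp (measurable_add_const α)) hdbl]
      have heq : (((· + α) ∘ (· + α)) ∘ fun z : Z => z + z)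
          = ((fun z : Z => z + z) ∘ (· + α)) := by
        funext z; show z + z + α + α = (z + α) + (z + α); abel
      rw [heq, ← Measure.map_map hdbl (measurable_add_const α), map_add_right_eq_self m α]
    rw [hαα, add_comm]
  haveI : IsProbabilityMeasure ((2 : ℝ≥0∞)⁻¹ • (θ + θα)) := by
    constructor
    simp only [Measure.smul_apply, Measure.add_apply, measure_univ, smul_eq_mul]
    rw [one_add_one_eq_two, ENNReal.inv_mul_cancel (by norm_num) (by norm_num)]
  have hm : (2 : ℝ≥0∞)⁻¹ • (θ + θα) = m := invariant_eq_haar_aux m α hR _ hinv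
  have h2 : θ + θα = (2 : ℝ≥0∞) • m := by
    rw [← hm, smul_smul, ENNReal.mul_inv_cancel (by norm_num) (by norm_num), one_smul]
  have hmap := congrArg (Measure.map (c + ·)) h2
  rw [Measure.map_add _ _ (measurable_const_add c), Measure.map_smul,
    map_add_left_eq_self m c] at hmap
  rw [Measure.map_map (measurable_const_add c) hdbl] at hmap
  rw [hθα, hθ, Measure.map_map (measurable_const_add c) (measurable_add_const α),
    Measure.map_map ((measurable_const_add c).comp (measurable_add_const α)) hdbl] at hmap
  have e1 : ((fun x => c + x) ∘ fun z : Z => z + z) = fun z : Z => c + (z + z) := rfl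
  have e2 : (((fun x => c + x) ∘ fun x => x + α) ∘ fun z : Z => z + z)
      = fun z : Z => c + (z + z) + α := by
    funext z; show c + (z + z + α) = c + (z + z) + α; abel
  rw [e1, e2] at hmap
  exact hmap

/-- Almost everywhere, the disintegration of an invariant measure over the Kronecker factor
is equivariant: `T η_z = η_{z + α}`. -/
lemma eta_equivariant_aux
    {X : Type*} [MetricSpace X] [CompactSpace X] [MeasurableSpace X] [BorelSpace X]
    (μ : Measure X) [IsProbabilityMeasure μ]
    (T : X → X) (hTmeas : Measurable T) (hT : MeasurePreserving T μ μ)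
    (m : Measure Z) [IsProbabilityMeasure m] [m.IsAddHaarMeasure]
    (α : Z)
    (π : X → Z) (hπmeas : Measurable π) (hπT : ∀ x, π (T x) = π x + α)
    (η : Z → Measure X) (hηprob : ∀ z, IsProbabilityMeasure (η z))
    (hηmeas : Measurable η)
    (hηdis : ∀ s D : Set _, MeasurableSet s → MeasurableSet D →
      μ (s ∩ π ⁻¹' D) = ∫⁻ z in D, η z s ∂m) :
    ∀ᵐ z ∂m, (η z).map T = η (z + α) := by
  have key : ∀ A : Set X, MeasurableSet A →
      ∀ᵐ z ∂m, η z (T ⁻¹' A) = η (z + α) A := by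
    intro A hA
    apply ae_eq_of_forall_setLIntegral_eq_of_sigmaFinite
    · exact (Measure.measurable_coe (hTmeas hA)).comp hηmeas
    · exact (Measure.measurable_coe hA).comp (hηmeas.comp (measurable_add_const α))
    · intro D hD _
      set E : Set Z := (fun w => w + (-α)) ⁻¹' D with hE
      have hEm : MeasurableSet E := (measurable_add_const (-α)) hD
      have hDE : (fun z => z + α) ⁻¹' E = D := by
        ext z; simp [hE]
      have hrhs : ∫⁻ z in D, η (z + α) A ∂m = ∫⁻ w in E, η w A ∂m := by
        rw [← hDE]
        exact (measurePreserving_add_right m α).setLIntegral_comp_preimage hEm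
          ((Measure.measurable_coe hA).comp hηmeas)
      have hset : T ⁻¹' A ∩ π ⁻¹' D = T ⁻¹' (A ∩ π ⁻¹' E) := by
        ext x
        simp only [Set.mem_inter_iff, Set.mem_preimage, hE, hπT]
        constructor
        · rintro ⟨h1, h2⟩; exact ⟨h1, by simpa using h2⟩
        · rintro ⟨h1, h2⟩; exact ⟨h1, by simpa using h2⟩
      rw [hrhs, ← hηdis A E hA hEm, ← hηdis (T ⁻¹' A) D (hTmeas hA) hD, hset]
      exact hT.measure_preimage (hA.inter (hπmeas hEm)).nullMeasurableSet
  set P : Set (Set X) := generatePiSystem (MeasurableSpace.countableGeneratingSet X) with hP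
  have hPc : P.Countable :=
    countable_generatePiSystem_aux (MeasurableSpace.countable_countableGeneratingSet)
  have hPm : ∀ A ∈ P, MeasurableSet A := fun A hA =>
    generatePiSystem_measurableSet
      (fun s hs => MeasurableSpace.measurableSet_countableGeneratingSet hs) A hA
  have hae : ∀ᵐ z ∂m, ∀ A ∈ P, η z (T ⁻¹' A) = η (z + α) A :=
    (ae_ball_iff hPc).mpr (fun A hA => key A (hPm A hA))
  filter_upwards [hae] with z hz
  haveI := hηprob z
  haveI := hηprob (z + α)
  haveI : IsProbabilityMeasure ((η z).map T) := Measure.isProbabilityMeasure_map hTmeas.aemeasurable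
  refine MeasureTheory.ext_of_generate_finite P
    ((generateFrom_generatePiSystem_eq.trans
      MeasurableSpace.generateFrom_countableGeneratingSet).symm)
    (isPiSystem_generatePiSystem _) (fun A hA => ?_) (by simp)
  rw [Measure.map_apply hTmeas (hPm A hA)]
  exact hz A hA

end Auxiliary

/-- for every `s ∈ X`, `(1/2)(π₂σ_s + T(π₂σ_s)) = μ`, where `π₂σ_s` is the
second marginal of `σ_s` and `T ν` denotes the pushforward of `ν` under `T`. -/
theorem sigma_second_marginal
    {X : Type*} [MetricSpace X] [CompactSpace X] [MeasurableSpace X] [BorelSpace X]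
    {Z : Type*} [MetricSpace Z] [CompactSpace Z] [AddCommGroup Z]
    [IsTopologicalAddGroup Z] [MeasurableSpace Z] [BorelSpace Z]
    (μ : Measure X) [IsProbabilityMeasure μ]
    (T : X → X) (hThom : IsHomeomorph T) (hT : Ergodic T μ)
    (m : Measure Z) [IsProbabilityMeasure m] [m.IsAddHaarMeasure]
    (α : Z) (hR : Ergodic (fun z => z + α) m)
    (π : X → Z) (hπcont : Continuous π) (hπT : ∀ x, π (T x) = π x + α)
    (hπm : μ.map π = m)
    -- maximality of the Kronecker factor: every eigenfunction of `T` factors through `π`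
    (hKron : ∀ (f : X → ℂ) (c : ℂ), Measurable f → (∀ᵐ x ∂μ, f (T x) = c * f x) →
      ∃ g : Z → ℂ, Measurable g ∧ ∀ᵐ x ∂μ, f x = g (π x))
    -- `η` is a disintegration of `μ` over `π`
    (η : Z → Measure X) (hηprob : ∀ z, IsProbabilityMeasure (η z))
    (hηmeas : Measurable η)
    (hηdis : ∀ s D : Set _, MeasurableSet s → MeasurableSet D →
      μ (s ∩ π ⁻¹' D) = ∫⁻ z in D, η z s ∂m)
    (hηfiber : ∀ᵐ z ∂m, η z (π ⁻¹' {z}) = 1)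
    -- the measure `σ_s = ∫_Z η_{π(s)+z} × η_{π(s)+2z} dm(z)`
    (σ : X → Measure (X × X))
    (hσ : ∀ s : X, σ s = m.bind (fun z => (η (π s + z)).prod (η (π s + (z + z))))) :
    ∀ s : X, (2 : ℝ≥0∞)⁻¹ • ((σ s).map Prod.snd + ((σ s).map Prod.snd).map T) = μ := by
  intro s
  set c : Z := π s with hc
  have hTmeas : Measurable T := hThom.continuous.measurable
  have hπmeas : Measurable π := hπcont.measurable
  have hdbl : Measurable fun z : Z => z + z := by measurability
  have hg1 : Measurable fun z : Z => c + (z + z) := (measurable_const_add c).comp hdbl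
  have hg2 : Measurable fun z : Z => c + (z + z) + α := (measurable_add_const α).comp hg1
  -- measurability of the product kernel
  have hFmeas : Measurable fun z : Z => (η (c + z)).prod (η (c + (z + z))) := by
    open ProbabilityTheory in
    let κ₁ : Kernel Z X := ⟨fun z => η (c + z), hηmeas.comp (measurable_const_add c)⟩
    let κ₂ : Kernel Z X := ⟨fun z => η (c + (z + z)), hηmeas.comp hg1⟩
    haveI : IsMarkovKernel κ₁ := ⟨fun a => hηprob _⟩
    haveI : IsMarkovKernel κ₂ := ⟨fun a => hηprob _⟩
    have h := (κ₁ ×ₖ κ₂).measurable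
    have heq : ∀ z, (κ₁ ×ₖ κ₂) z = (η (c + z)).prod (η (c + (z + z))) := by
      intro z
      rw [Kernel.prod_apply]
      rfl
    simpa [funext heq] using h
  -- the second marginal of σ_s, applied to a measurable set
  have hmarg : ∀ A : Set X, MeasurableSet A →
      ((σ s).map Prod.snd) A = ∫⁻ z, η (c + (z + z)) A ∂m := by
    intro A hA
    rw [Measure.map_apply measurable_snd hA, hσ s, ← hc,
      Measure.bind_apply (measurable_snd hA) hFmeas.aemeasurable]
    have hpre : (Prod.snd : X × X → X) ⁻¹' A = (Set.univ : Set X) ×ˢ A := by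
      ext ⟨x, y⟩; simp
    refine lintegral_congr (fun z => ?_)
    haveI := hηprob (c + z)
    haveI := hηprob (c + (z + z))
    rw [hpre, Measure.prod_prod, measure_univ, one_mul]
  -- the equivariance of η, transported along z ↦ c + 2z
  have hDH := double_haar_aux m α hR c
  have hequiv0 : ∀ᵐ w ∂m, (η w).map T = η (w + α) :=
    eta_equivariant_aux μ T hTmeas hT.toMeasurePreserving m α π hπmeas hπT η hηprob hηmeas hηdis
  have hac : Measure.map (fun z => c + (z + z)) m ≪ m := by
    have hle : Measure.map (fun z => c + (z + z)) m ≤ (2 : ℝ≥0∞) • m := by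
      rw [← hDH]; exact Measure.le_add_right le_rfl
    exact (Measure.absolutelyContinuous_of_le hle).trans Measure.smul_absolutelyContinuous
  have hequiv : ∀ᵐ z ∂m, (η (c + (z + z))).map T = η (c + (z + z) + α) := by
    have h1 : ∀ᵐ w ∂(Measure.map (fun z => c + (z + z)) m), (η w).map T = η (w + α) :=
      hequiv0.filter_mono hac.ae_le
    exact ae_of_ae_map hg1.aemeasurable h1
  -- the main computation
  refine Measure.ext (fun A hA => ?_)
  rw [Measure.smul_apply, Measure.add_apply, Measure.map_apply hTmeas hA, hmarg A hA,
    hmarg _ (hTmeas hA)]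
  have hsecond : ∫⁻ z, η (c + (z + z)) (T ⁻¹' A) ∂m
      = ∫⁻ z, η (c + (z + z) + α) A ∂m := by
    refine lintegral_congr_ae ?_
    filter_upwards [hequiv] with z hz
    rw [← Measure.map_apply hTmeas hA, hz]
  have e3 : ∫⁻ z, η (c + (z + z)) A ∂m
      = ∫⁻ w, η w A ∂(Measure.map (fun z => c + (z + z)) m) :=
    (lintegral_map (f := fun w => η w A) (g := fun z => c + (z + z))
      ((Measure.measurable_coe hA).comp hηmeas) hg1).symm
  have e4 : ∫⁻ z, η (c + (z + z) + α) A ∂m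
      = ∫⁻ w, η w A ∂(Measure.map (fun z => c + (z + z) + α) m) :=
    (lintegral_map (f := fun w => η w A) (g := fun z => c + (z + z) + α)
      ((Measure.measurable_coe hA).comp hηmeas) hg2).symm
  rw [hsecond, e3, e4, ← lintegral_add_measure, hDH, lintegral_smul_measure]
  have hμA : μ A = ∫⁻ z, η z A ∂m := by
    have := hηdis A Set.univ hA MeasurableSet.univ
    simpa using this
  rw [← hμA, smul_eq_mul, smul_eq_mul, ← mul_assoc,
    ENNReal.inv_mul_cancel (by norm_num) (by norm_num), one_mul]
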